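/- Let n be a nonnegative integer and let k, l be integers with k, l ≥ -1 and k + l < n - 1. A real polynomial p of degree at most n satisfies p^{(i)}(0) = 0 for i = 0,1,…,k and p^{(j)}(1) = 0 for j = 0,1,…,l if and only if p lies in the linear span of the Bernstein polynomials {B_{k+1}^n, B_{k+2}^n, …, B_{n-l-1}^n}. -/

import Mathlib

open MeasureTheory Polynomial

private lemma dvd_iff_deriv (p : Polynomial ℝ) (hp : p ≠ 0) (t : ℝ) (m : ℕ) :
    (X - C t) ^ m ∣ p ↔ ∀ i < m, (Polynomial.derivative^[i] p).eval t = 0 := by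
  cases m with
  | zero => simp
  | succ m =>
    rw [← Polynomial.le_rootMultiplicity_iff hp, Nat.add_one_le_iff,
      Polynomial.lt_rootMultiplicity_iff_isRoot_iterate_derivative_of_mem_nonZeroDivisors hp
        (mem_nonZeroDivisors_of_ne_zero (by exact_mod_cast m.factorial_ne_zero))]
    constructor
    · intro h i hi
      exact h i (Nat.lt_add_one_iff.mp hi)
    · intro h i hi
      exact h i (Nat.lt_add_one_iff.mpr hi)

private lemma span_aux (m : ℕ) : ∀ p : Polynomial ℝ, p.degree ≤ m →
    p ∈ Submodule.span ℝ {q : Polynomial ℝ | ∃ i ≤ m, q = X ^ i * (1 - X) ^ (m - i)} := by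
  induction m with
  | zero =>
    intro p hp
    rw [Polynomial.eq_C_of_degree_le_zero (p := p) (by exact_mod_cast hp)]
    have h1 : (1 : Polynomial ℝ) ∈ {q : Polynomial ℝ | ∃ i ≤ 0, q = X ^ i * (1 - X) ^ (0 - i)} :=
      ⟨0, le_rfl, by simp⟩
    have := Submodule.smul_mem (Submodule.span ℝ _) (p.coeff 0) (Submodule.subset_span h1)
    simpa [Polynomial.smul_eq_C_mul] using this
  | succ m ih =>
    intro p hp
    set c := p.eval 1 with hc
    have hroot : (X - C 1) ∣ (p - C c * X ^ (m + 1)) := by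
      rw [Polynomial.dvd_iff_isRoot]
      simp [Polynomial.IsRoot, hc]
    obtain ⟨q, hq⟩ := hroot
    have hqd : q.degree ≤ m := by
      rcases eq_or_ne q 0 with h0 | h0
      · simp [h0]
      have hd : ((X - C 1 : Polynomial ℝ) * q).degree ≤ (m + 1 : ℕ) := by
        rw [← hq]
        refine le_trans (Polynomial.degree_sub_le _ _) (max_le hp ?_)
        refine le_trans (Polynomial.degree_mul_le _ _) ?_
        rw [Polynomial.degree_X_pow]
        refine le_trans (add_le_add_left Polynomial.degree_C_le _) ?_
        simp
      rw [Polynomial.degree_mul, Polynomial.degree_X_sub_C] at hd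
      rw [Polynomial.degree_eq_natDegree h0] at hd ⊢
      rw [show ((m+1 : ℕ) : WithBot ℕ) = ((1:ℕ) : WithBot ℕ) + (m : ℕ) by push_cast; ring] at hd
      exact_mod_cast (WithBot.add_le_add_iff_left (by simp)).mp hd
    have hqs := ih q hqd
    -- (1 - X) * q is in the span of the level m+1 generators
    have hmap : (1 - X) * q ∈ Submodule.span ℝ
        {r : Polynomial ℝ | ∃ i ≤ m + 1, r = X ^ i * (1 - X) ^ (m + 1 - i)} := by
      have h1 : (1 - X) * q ∈ Submodule.map (LinearMap.mulLeft ℝ (1 - X : Polynomial ℝ))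
          (Submodule.span ℝ {q : Polynomial ℝ | ∃ i ≤ m, q = X ^ i * (1 - X) ^ (m - i)}) :=
        Submodule.mem_map_of_mem hqs
      rw [Submodule.map_span] at h1
      refine Submodule.span_mono ?_ h1
      rintro r ⟨s, ⟨i, him, rfl⟩, rfl⟩
      refine ⟨i, him.trans (Nat.le_succ m), ?_⟩
      simp only [LinearMap.mulLeft_apply]
      rw [show m + 1 - i = (m - i) + 1 by omega, pow_succ]
      ring
    have hXm : (X : Polynomial ℝ) ^ (m + 1) ∈ Submodule.span ℝ
        {r : Polynomial ℝ | ∃ i ≤ m + 1, r = X ^ i * (1 - X) ^ (m + 1 - i)} := by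
      exact Submodule.subset_span ⟨m + 1, le_rfl, by simp⟩
    have hmem2 : (X - C 1 : Polynomial ℝ) * q ∈ Submodule.span ℝ
        {r : Polynomial ℝ | ∃ i ≤ m + 1, r = X ^ i * (1 - X) ^ (m + 1 - i)} := by
      have he : (X - C 1 : Polynomial ℝ) * q = -((1 - X) * q) := by
        simp only [map_one]; ring
      rw [he]
      exact Submodule.neg_mem _ hmap
    have hpe : p = C c * X ^ (m + 1) + (X - C 1) * q := by
      rw [← hq]; ring
    rw [hpe]
    refine Submodule.add_mem _ ?_ hmem2
    have := Submodule.smul_mem (Submodule.span ℝ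
      {r : Polynomial ℝ | ∃ i ≤ m + 1, r = X ^ i * (1 - X) ^ (m + 1 - i)}) c hXm
    rwa [Polynomial.smul_eq_C_mul] at this

theorem stmt5 (n : ℕ) (k l : ℤ) (hk : -1 ≤ k) (hl : -1 ≤ l) (hkl : k + l < (n : ℤ) - 1)
    (p : Polynomial ℝ) (hp : p.degree ≤ n) :
    ((∀ i : ℕ, (i : ℤ) ≤ k → (Polynomial.derivative^[i] p).eval 0 = 0) ∧
        (∀ j : ℕ, (j : ℤ) ≤ l → (Polynomial.derivative^[j] p).eval 1 = 0)) ↔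
      p ∈ Submodule.span ℝ
          {q : Polynomial ℝ | ∃ i : ℕ,
            (k + 1 ≤ (i : ℤ) ∧ (i : ℤ) ≤ (n : ℤ) - l - 1) ∧ q = bernsteinPolynomial ℝ n i} := by
  constructor
  · rintro ⟨h0, h1⟩
    rcases eq_or_ne p 0 with rfl | hp0
    · exact Submodule.zero_mem _
    set k' := (k + 1).toNat with hk'
    set l' := (l + 1).toNat with hl'
    have hk'c : (k' : ℤ) = k + 1 := Int.toNat_of_nonneg (by omega)
    have hl'c : (l' : ℤ) = l + 1 := Int.toNat_of_nonneg (by omega)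
    have hkln : k' + l' ≤ n := by omega
    set m := n - (k' + l') with hm
    have hnm : n = k' + l' + m := by omega
    have hdvd0 : (X - C (0:ℝ)) ^ k' ∣ p := by
      rw [dvd_iff_deriv p hp0]
      intro i hi
      exact h0 i (by omega)
    have hdvd1 : (X - C (1:ℝ)) ^ l' ∣ p := by
      rw [dvd_iff_deriv p hp0]
      intro j hj
      exact h1 j (by omega)
    rw [map_zero, sub_zero] at hdvd0
    have hcop : IsCoprime ((X : Polynomial ℝ) ^ k') ((X - C 1) ^ l') := by
      refine IsCoprime.pow ?_
      exact ⟨1, -1, by ring_nf; simp⟩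
    obtain ⟨q, hq⟩ := hcop.mul_dvd hdvd0 hdvd1
    have hq0 : q ≠ 0 := by
      rintro rfl
      rw [mul_zero] at hq
      exact hp0 hq
    have hqd : q.degree ≤ m := by
      have h1 : p.natDegree = k' + l' + q.natDegree := by
        rw [hq, Polynomial.natDegree_mul (mul_ne_zero (pow_ne_zero _ Polynomial.X_ne_zero)
            (pow_ne_zero _ (Polynomial.X_sub_C_ne_zero 1))) hq0,
          Polynomial.natDegree_mul (pow_ne_zero _ Polynomial.X_ne_zero)
            (pow_ne_zero _ (Polynomial.X_sub_C_ne_zero 1)),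
          Polynomial.natDegree_pow, Polynomial.natDegree_pow,
          Polynomial.natDegree_X_sub_C, Polynomial.natDegree_X, mul_one, mul_one]
      have h2 : p.natDegree ≤ n := Polynomial.natDegree_le_iff_degree_le.mpr hp
      rw [Polynomial.degree_eq_natDegree hq0]
      exact_mod_cast (by omega : q.natDegree ≤ m)
    have hqs := span_aux m q hqd
    have hmap : p ∈ Submodule.span ℝ
        ((fun r => (X ^ k' * (X - C 1) ^ l') * r) ''
          {r : Polynomial ℝ | ∃ i ≤ m, r = X ^ i * (1 - X) ^ (m - i)}) := by
      have h1 : p ∈ Submodule.map (LinearMap.mulLeft ℝ ((X : Polynomial ℝ) ^ k' * (X - C 1) ^ l'))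
          (Submodule.span ℝ {r : Polynomial ℝ | ∃ i ≤ m, r = X ^ i * (1 - X) ^ (m - i)}) :=
        ⟨q, hqs, by rw [LinearMap.mulLeft_apply, ← hq]⟩
      rwa [Submodule.map_span] at h1
    refine Submodule.span_le.mpr ?_ hmap
    rintro r ⟨s, ⟨j, hjm, rfl⟩, rfl⟩
    have hle : k' + j ≤ n := by omega
    have hb : bernsteinPolynomial ℝ n (k' + j) =
        (n.choose (k' + j) : ℝ) • (X ^ (k' + j) * (1 - X) ^ (n - (k' + j))) := by
      rw [bernsteinPolynomial, Polynomial.smul_eq_C_mul, Polynomial.C_eq_natCast]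
      ring
    have hchoose : (n.choose (k' + j) : ℝ) ≠ 0 := by
      exact_mod_cast Nat.choose_pos hle |>.ne'
    have hexp : n - (k' + j) = l' + (m - j) := by omega
    have key : (X ^ k' * (X - C 1) ^ l') * (X ^ j * (1 - X) ^ (m - j)) =
        (((-1 : ℝ)) ^ l' * (n.choose (k' + j) : ℝ)⁻¹) • bernsteinPolynomial ℝ n (k' + j) := by
      rw [hb, smul_smul, mul_assoc ((-1:ℝ) ^ l'), inv_mul_cancel₀ hchoose, mul_one,
        Polynomial.smul_eq_C_mul,
        hexp, pow_add, show ((X : Polynomial ℝ) - C 1) = -(1 - X) by simp only [map_one]; ring,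
        neg_pow]
      rw [map_pow, map_neg, map_one, pow_add]
      ring
    simp only [Set.mem_setOf_eq]
    rw [key]
    refine Submodule.smul_mem _ _ (Submodule.subset_span ⟨k' + j, ⟨?_, ?_⟩, rfl⟩)
    · push_cast; omega
    · push_cast; omega
  · intro hmem
    clear hp hkl
    induction hmem using Submodule.span_induction with
    | mem q hq =>
      obtain ⟨i, ⟨hi1, hi2⟩, rfl⟩ := hq
      constructor
      · intro i' hi'
        exact bernsteinPolynomial.iterate_derivative_at_0_eq_zero_of_lt ℝ n (by omega)
      · intro j hj
        exact bernsteinPolynomial.iterate_derivative_at_1_eq_zero_of_lt ℝ n (by omega)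
    | zero => simp
    | add a b _ _ ha hb =>
      exact ⟨fun i hi => by
          simp [iterate_map_add derivative i a b, ha.1 i hi, hb.1 i hi],
        fun j hj => by
          simp [iterate_map_add derivative j a b, ha.2 j hj, hb.2 j hj]⟩
    | smul c a _ ha =>
      exact ⟨fun i hi => by
          simp [Polynomial.iterate_derivative_smul, ha.1 i hi],
        fun j hj => by
          simp [Polynomial.iterate_derivative_smul, ha.2 j hj]⟩
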